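/- Consider the Cucker–Smale system v̇ᵢ = (λ/N) Σⱼ ψ(|xᵢ−xⱼ|)(vⱼ − vᵢ) with λ > 0 and communication rate ψ bounded below by ψ_min > 0. Then the velocity diameter D(t) = max_{i,j} |vᵢ(t) − vⱼ(t)| satisfies D(t) ≤ D(0) e^{−λ ψ_min t}, i.e., unconditional flocking occurs. -/

import Mathlib

open Filter Topology Real
open scoped RealInnerProductSpace

/-- The right lower Dini derivative of a finite max of differentiable functions is
bounded by any bound `C` on the derivatives of the active functions. -/
lemma freq_slope_ciSup_lt {ι : Type*} [Fintype ι] [Nonempty ι]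
    (g : ι → ℝ → ℝ) (g' : ι → ℝ) (x : ℝ)
    (hg : ∀ i, HasDerivAt (g i) (g' i) x)
    {C r : ℝ} (hC : ∀ i, g i x = (⨆ j, g j x) → g' i ≤ C) (hr : C < r) :
    ∃ᶠ z in 𝓝[>] x, (z - x)⁻¹ * ((⨆ j, g j z) - ⨆ j, g j x) < r := by
  by_contra hcon
  rw [Filter.not_frequently] at hcon
  have hactive : ∃ i, ∃ᶠ z in 𝓝[>] x, g i z = ⨆ j, g j z := by
    by_contra h
    push_neg at h
    have h2 : ∀ᶠ z in 𝓝[>] x, ∀ i, ¬ g i z = ⨆ j, g j z := Filter.eventually_all.2 h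
    obtain ⟨z, hz⟩ := h2.exists
    obtain ⟨i, hi⟩ := exists_eq_ciSup_of_finite (f := fun j => g j z)
    exact hz i hi
  obtain ⟨i, hi⟩ := hactive
  have hle : g i x ≤ ⨆ j, g j x :=
    le_ciSup (f := fun j => g j x) (Set.Finite.bddAbove (Set.finite_range _)) i
  have htends : Tendsto (fun z => (z - x)⁻¹ * (g i z - g i x)) (𝓝[>] x) (𝓝 (g' i)) := by
    have h1 := hasDerivAt_iff_tendsto_slope.1 (hg i)
    have h2 : 𝓝[>] x ≤ 𝓝[≠] x := nhdsWithin_mono x (fun z hz => ne_of_gt hz)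
    refine (h1.mono_left h2).congr (fun z => ?_)
    rw [slope_def_field, div_eq_inv_mul]
  set l' := 𝓝[>] x ⊓ 𝓟 {z | g i z = (⨆ j, g j z) ∧
      ¬ (z - x)⁻¹ * ((⨆ j, g j z) - ⨆ j, g j x) < r} with hl'
  have hne : l'.NeBot := by
    rw [hl', ← Filter.frequently_iff_neBot]
    exact hi.and_eventually hcon
  have hgt : ∀ᶠ z in l', x < z :=
    Filter.Eventually.filter_mono inf_le_left self_mem_nhdsWithin
  have hmem : ∀ᶠ z in l', g i z = (⨆ j, g j z) ∧
      ¬ (z - x)⁻¹ * ((⨆ j, g j z) - ⨆ j, g j x) < r :=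
    Filter.Eventually.filter_mono inf_le_right
      (Filter.eventually_principal.2 fun z hz => hz)
  have htends' : Tendsto (fun z => (z - x)⁻¹ * (g i z - g i x)) l' (𝓝 (g' i)) :=
    htends.mono_left inf_le_left
  rcases hle.lt_or_eq with hlt | heq
  · -- inactive index: slope blows up, contradiction with finite derivative
    have hinv : Tendsto (fun z => (z - x)⁻¹) (𝓝[>] x) atTop := by
      have hsub : Tendsto (fun z => z - x) (𝓝[>] x) (𝓝[>] (0:ℝ)) := by
        apply tendsto_nhdsWithin_of_tendsto_nhds_of_eventually_within
        · have h0 : Tendsto (fun z : ℝ => z - x) (𝓝 x) (𝓝 (x - x)) :=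
            (continuous_id.sub continuous_const).tendsto x
          simpa using h0.mono_left (nhdsWithin_le_nhds (s := Set.Ioi x))
        · filter_upwards [self_mem_nhdsWithin] with z hz
          exact sub_pos.2 (Set.mem_Ioi.mp hz)
      exact tendsto_inv_nhdsGT_zero.comp hsub
    have hc : (0:ℝ) < (⨆ j, g j x) - g i x := sub_pos.2 hlt
    have hbig : Tendsto (fun z => r + (z - x)⁻¹ * ((⨆ j, g j x) - g i x)) l' atTop := by
      apply tendsto_atTop_add_const_left
      exact (hinv.mono_left inf_le_left).atTop_mul_const hc
    have hev : ∀ᶠ z in l',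
        r + (z - x)⁻¹ * ((⨆ j, g j x) - g i x) ≤ (z - x)⁻¹ * (g i z - g i x) := by
      filter_upwards [hgt, hmem] with z hz hzz
      obtain ⟨hact, hslope⟩ := hzz
      rw [not_lt] at hslope
      have hkey : (z - x)⁻¹ * (g i z - g i x)
          = (z - x)⁻¹ * ((⨆ j, g j z) - ⨆ j, g j x)
            + (z - x)⁻¹ * ((⨆ j, g j x) - g i x) := by
        rw [hact]; ring
      linarith
    exact not_tendsto_atTop_of_tendsto_nhds htends' (tendsto_atTop_mono' l' hev hbig)
  · -- active index: slope frequently ≥ r but derivative ≤ C < r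
    have hC' := hC i heq
    have hev : ∀ᶠ z in l', r ≤ (z - x)⁻¹ * (g i z - g i x) := by
      filter_upwards [hmem] with z hzz
      obtain ⟨hact, hslope⟩ := hzz
      rw [not_lt] at hslope
      rw [hact, heq]
      exact hslope
    have : r ≤ g' i := ge_of_tendsto htends' hev
    linarith

/-- Unconditional flocking for the Cucker–Smale system with communication
rate bounded below: the velocity diameter decays like `D(0) e^{−λψ_min t}`. -/
theorem cucker_smale_unconditional_flocking (d N : ℕ)
    (lam ψmin : ℝ) (hlam : 0 < lam) (hψmin : 0 < ψmin)
    (ψ : ℝ → ℝ) (hψcont : Continuous ψ)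
    (hψanti : ∀ r s : ℝ, 0 ≤ r → r ≤ s → ψ s ≤ ψ r)
    (hψlb : ∀ r : ℝ, 0 ≤ r → ψmin ≤ ψ r)
    (x v : ℝ → Fin N → EuclideanSpace ℝ (Fin d))
    (hx : ∀ i t, HasDerivAt (fun s => x s i) (v t i) t)
    (hv : ∀ i t, HasDerivAt (fun s => v s i)
      ((lam / N) • ∑ j : Fin N, ψ (‖x t i - x t j‖) • (v t j - v t i)) t) :
    ∀ t : ℝ, 0 ≤ t → ∀ i j : Fin N,
      ‖v t i - v t j‖ ≤ (⨆ k : Fin N, ⨆ l : Fin N, ‖v 0 k - v 0 l‖)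
        * Real.exp (-(lam * ψmin) * t) := by
  intro t ht i j
  haveI : Nonempty (Fin N) := ⟨i⟩
  have hN : (0:ℝ) < N := by
    have := Fin.pos_iff_nonempty.2 ‹Nonempty (Fin N)›
    exact_mod_cast this
  have hNne : (N:ℝ) ≠ 0 := ne_of_gt hN
  set V : ℝ → Fin N → EuclideanSpace ℝ (Fin d) :=
    fun s k => (lam / N) • ∑ l : Fin N, ψ (‖x s k - x s l‖) • (v s l - v s k) with hV
  set g : Fin N × Fin N → ℝ → ℝ := fun p z => ‖v z p.1 - v z p.2‖ ^ 2 with hg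
  set f : ℝ → ℝ := fun z => ⨆ p : Fin N × Fin N, g p z with hf
  have hbdd : ∀ z, BddAbove (Set.range fun p : Fin N × Fin N => g p z) :=
    fun z => Set.Finite.bddAbove (Set.finite_range _)
  have hgderiv : ∀ (p : Fin N × Fin N) (s : ℝ),
      HasDerivAt (g p) (2 * ⟪v s p.1 - v s p.2, V s p.1 - V s p.2⟫) s := by
    intro p s
    have h1 : HasDerivAt (fun z => v z p.1 - v z p.2) (V s p.1 - V s p.2) s :=
      (hv p.1 s).sub (hv p.2 s)
    have h2 := h1.inner ℝ h1
    have h3 : (fun z : ℝ => ⟪v z p.1 - v z p.2, v z p.1 - v z p.2⟫) = g p := by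
      funext z
      rw [hg, real_inner_self_eq_norm_sq]
    rw [h3] at h2
    have e : 2 * ⟪v s p.1 - v s p.2, V s p.1 - V s p.2⟫
        = ⟪v s p.1 - v s p.2, V s p.1 - V s p.2⟫ + ⟪V s p.1 - V s p.2, v s p.1 - v s p.2⟫ := by
      rw [real_inner_comm (V s p.1 - V s p.2)]
      ring
    rw [e]
    exact h2
  -- key differential inequality at a maximizing pair
  have key : ∀ (s : ℝ) (p : Fin N × Fin N),
      (∀ k l : Fin N, ‖v s k - v s l‖ ≤ ‖v s p.1 - v s p.2‖) →
      ⟪v s p.1 - v s p.2, V s p.1 - V s p.2⟫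
        ≤ -(lam * ψmin) * ‖v s p.1 - v s p.2‖ ^ 2 := by
    intro s p hmax
    set w := v s p.1 - v s p.2 with hw
    have hPi : ∀ k : Fin N, ⟪w, v s k - v s p.1⟫ ≤ 0 := by
      intro k
      have h1 : ⟪w, v s k - v s p.1⟫ = ⟪w, v s k - v s p.2⟫ - ⟪w, w⟫ := by
        rw [hw, ← inner_sub_right]
        congr 1
        abel
      have h2 : ⟪w, v s k - v s p.2⟫ ≤ ‖w‖ * ‖v s k - v s p.2‖ := real_inner_le_norm _ _
      have h3 : ‖v s k - v s p.2‖ ≤ ‖w‖ := hmax k p.2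
      have h4 : ⟪w, w⟫ = ‖w‖ * ‖w‖ := real_inner_self_eq_norm_mul_norm w
      nlinarith [norm_nonneg w]
    have hPj : ∀ k : Fin N, 0 ≤ ⟪w, v s k - v s p.2⟫ := by
      intro k
      have h1 : ⟪w, v s p.2 - v s k⟫ = ⟪w, v s p.1 - v s k⟫ - ⟪w, w⟫ := by
        rw [hw, ← inner_sub_right]
        congr 1
        abel
      have h2 : ⟪w, v s p.1 - v s k⟫ ≤ ‖w‖ * ‖v s p.1 - v s k‖ := real_inner_le_norm _ _
      have h3 : ‖v s p.1 - v s k‖ ≤ ‖w‖ := hmax p.1 k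
      have h4 : ⟪w, w⟫ = ‖w‖ * ‖w‖ := real_inner_self_eq_norm_mul_norm w
      have h5 : ⟪w, v s p.2 - v s k⟫ ≤ 0 := by nlinarith [norm_nonneg w]
      have h6 : ⟪w, v s k - v s p.2⟫ = -⟪w, v s p.2 - v s k⟫ := by
        rw [← inner_neg_right]
        congr 1
        abel
      linarith
    have hVi : ⟪w, V s p.1⟫ = (lam / N) *
        ∑ k : Fin N, ψ (‖x s p.1 - x s k‖) * ⟪w, v s k - v s p.1⟫ := by
      rw [hV]
      rw [real_inner_smul_right, inner_sum]
      congr 1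
      refine Finset.sum_congr rfl fun k _ => ?_
      rw [real_inner_smul_right]
    have hVj : ⟪w, V s p.2⟫ = (lam / N) *
        ∑ k : Fin N, ψ (‖x s p.2 - x s k‖) * ⟪w, v s k - v s p.2⟫ := by
      rw [hV]
      rw [real_inner_smul_right, inner_sum]
      congr 1
      refine Finset.sum_congr rfl fun k _ => ?_
      rw [real_inner_smul_right]
    have hlamN : (0:ℝ) ≤ lam / N := by positivity
    have h1 : ⟪w, V s p.1⟫ ≤ (lam / N) * (ψmin * ∑ k : Fin N, ⟪w, v s k - v s p.1⟫) := by
      rw [hVi]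
      apply mul_le_mul_of_nonneg_left _ hlamN
      rw [Finset.mul_sum]
      refine Finset.sum_le_sum fun k _ => ?_
      exact mul_le_mul_of_nonpos_right (hψlb _ (norm_nonneg _)) (hPi k)
    have h2 : (lam / N) * (ψmin * ∑ k : Fin N, ⟪w, v s k - v s p.2⟫) ≤ ⟪w, V s p.2⟫ := by
      rw [hVj]
      apply mul_le_mul_of_nonneg_left _ hlamN
      rw [Finset.mul_sum]
      refine Finset.sum_le_sum fun k _ => ?_
      exact mul_le_mul_of_nonneg_right (hψlb _ (norm_nonneg _)) (hPj k)
    have hsum : (∑ k : Fin N, ⟪w, v s k - v s p.1⟫) - (∑ k : Fin N, ⟪w, v s k - v s p.2⟫)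
        = (N : ℝ) * (-(‖w‖ ^ 2)) := by
      rw [← Finset.sum_sub_distrib]
      have hterm : ∀ k ∈ Finset.univ,
          ⟪w, v s k - v s p.1⟫ - ⟪w, v s k - v s p.2⟫ = -(‖w‖ ^ 2) := by
        intro k _
        rw [← inner_sub_right]
        have hab : (v s k - v s p.1) - (v s k - v s p.2) = -w := by
          rw [hw]; abel
        rw [hab, inner_neg_right, real_inner_self_eq_norm_sq]
      rw [Finset.sum_congr rfl hterm, Finset.sum_const, Finset.card_univ, Fintype.card_fin]
      simp [nsmul_eq_mul]
    have h3 : ⟪w, V s p.1 - V s p.2⟫ = ⟪w, V s p.1⟫ - ⟪w, V s p.2⟫ :=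
      inner_sub_right _ _ _
    have h4 : ⟪w, V s p.1⟫ - ⟪w, V s p.2⟫
        ≤ (lam / N) * (ψmin * ((N:ℝ) * (-(‖w‖ ^ 2)))) := by
      have := sub_le_sub h1 h2
      calc ⟪w, V s p.1⟫ - ⟪w, V s p.2⟫
          ≤ (lam / N) * (ψmin * ∑ k : Fin N, ⟪w, v s k - v s p.1⟫)
            - (lam / N) * (ψmin * ∑ k : Fin N, ⟪w, v s k - v s p.2⟫) := this
        _ = (lam / N) * (ψmin * ((∑ k : Fin N, ⟪w, v s k - v s p.1⟫)
              - ∑ k : Fin N, ⟪w, v s k - v s p.2⟫)) := by ring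
        _ = (lam / N) * (ψmin * ((N:ℝ) * (-(‖w‖ ^ 2)))) := by rw [hsum]
    have h5 : (lam / N) * (ψmin * ((N:ℝ) * (-(‖w‖ ^ 2)))) = -(lam * ψmin) * ‖w‖ ^ 2 := by
      field_simp
    rw [h3]
    rw [h5] at h4
    exact h4
  -- continuity of the max
  have hfsup' : f = fun z => Finset.univ.sup' Finset.univ_nonempty
      (fun p : Fin N × Fin N => g p z) := by
    funext z
    rw [hf, Finset.sup'_univ_eq_ciSup]
  have hfcont : Continuous f := by
    rw [continuous_iff_continuousAt]
    intro z
    rw [hfsup']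
    exact ContinuousAt.finset_sup'_apply _ (fun p _ => (hgderiv p z).continuousAt)
  -- Grönwall
  have gron := le_gronwallBound_of_liminf_deriv_right_le
    (f := f) (f' := fun z => -(2 * (lam * ψmin)) * f z) (δ := f 0)
    (K := -(2 * (lam * ψmin))) (ε := 0) (a := 0) (b := t)
    hfcont.continuousOn
    (by
      intro s _ r hr
      refine freq_slope_ciSup_lt g
        (fun p => 2 * ⟪v s p.1 - v s p.2, V s p.1 - V s p.2⟫) s
        (fun p => hgderiv p s) (C := -(2 * (lam * ψmin)) * f s) ?_ hr
      intro p hp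
      have hmax : ∀ k l : Fin N, ‖v s k - v s l‖ ≤ ‖v s p.1 - v s p.2‖ := by
        intro k l
        have hkl : g (k, l) s ≤ ⨆ q : Fin N × Fin N, g q s := le_ciSup (hbdd s) (k, l)
        rw [← hp] at hkl
        have h2 : ‖v s k - v s l‖ ^ 2 ≤ ‖v s p.1 - v s p.2‖ ^ 2 := hkl
        nlinarith [norm_nonneg (v s k - v s l), norm_nonneg (v s p.1 - v s p.2)]
      have hkey := key s p hmax
      have hps : f s = ‖v s p.1 - v s p.2‖ ^ 2 := hp.symm
      show 2 * ⟪v s p.1 - v s p.2, V s p.1 - V s p.2⟫ ≤ -(2 * (lam * ψmin)) * f s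
      rw [hps]
      linarith)
    le_rfl
    (by
      intro s _
      exact le_of_eq (by ring))
  have hft : f t ≤ f 0 * Real.exp (-(2 * (lam * ψmin)) * t) := by
    have := gron t ⟨ht, le_rfl⟩
    rwa [sub_zero, gronwallBound_ε0] at this
  -- conclude
  set D0 := ⨆ k : Fin N, ⨆ l : Fin N, ‖v 0 k - v 0 l‖ with hD0
  have hD0le : ∀ k l : Fin N, ‖v 0 k - v 0 l‖ ≤ D0 := by
    intro k l
    have h1 : ‖v 0 k - v 0 l‖ ≤ ⨆ l' : Fin N, ‖v 0 k - v 0 l'‖ :=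
      le_ciSup (f := fun l' => ‖v 0 k - v 0 l'‖) (Set.Finite.bddAbove (Set.finite_range _)) l
    exact h1.trans (le_ciSup (f := fun k' => ⨆ l' : Fin N, ‖v 0 k' - v 0 l'‖)
      (Set.Finite.bddAbove (Set.finite_range _)) k)
  have hD0nn : (0:ℝ) ≤ D0 := (norm_nonneg (v 0 i - v 0 i)).trans (hD0le i i)
  have hf0 : f 0 ≤ D0 ^ 2 := by
    refine ciSup_le fun p => ?_
    exact pow_le_pow_left₀ (norm_nonneg _) (hD0le p.1 p.2) 2
  have hfinal : ‖v t i - v t j‖ ^ 2 ≤ (D0 * Real.exp (-(lam * ψmin) * t)) ^ 2 := by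
    have h1 : ‖v t i - v t j‖ ^ 2 ≤ f t := le_ciSup (hbdd t) (i, j)
    have h2 : f 0 * Real.exp (-(2 * (lam * ψmin)) * t)
        ≤ D0 ^ 2 * Real.exp (-(2 * (lam * ψmin)) * t) :=
      mul_le_mul_of_nonneg_right hf0 (Real.exp_nonneg _)
    have h3 : (D0 * Real.exp (-(lam * ψmin) * t)) ^ 2
        = D0 ^ 2 * Real.exp (-(2 * (lam * ψmin)) * t) := by
      rw [mul_pow, sq (Real.exp _), ← Real.exp_add]
      ring_nf
    rw [h3]
    exact h1.trans (hft.trans h2)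
  calc ‖v t i - v t j‖
      = Real.sqrt (‖v t i - v t j‖ ^ 2) := (Real.sqrt_sq (norm_nonneg _)).symm
    _ ≤ Real.sqrt ((D0 * Real.exp (-(lam * ψmin) * t)) ^ 2) := Real.sqrt_le_sqrt hfinal
    _ = D0 * Real.exp (-(lam * ψmin) * t) :=
        Real.sqrt_sq (mul_nonneg hD0nn (Real.exp_nonneg _))
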